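/- In the dihedral Artin group A_k with the Artin-generator word metric d, the sequence xₙ = prod(a,b;n) (the alternating word abab⋯ of length n) satisfies d(e,xₙ) = n for all n; that is, the alternating positive word is geodesic. -/

import Mathlib

/-- Alternating product `prodd s t n = stst⋯` with `n` factors. -/
def prodd {G : Type*} [Monoid G] : G → G → ℕ → G
  | _, _, 0 => 1
  | s, t, n + 1 => s * prodd t s n

/-- The single relation `prod(a,b;k) = prod(b,a;k)` of the dihedral Artin group. -/
def ArtinRels (k : ℕ) : Set (FreeGroup Bool) :=
  {prodd (FreeGroup.of true) (FreeGroup.of false) k *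
    (prodd (FreeGroup.of false) (FreeGroup.of true) k)⁻¹}

/-- The Artin group of dihedral type `A_k`. -/
abbrev Artin (k : ℕ) : Type := PresentedGroup (ArtinRels k)

def Artin.a (k : ℕ) : Artin k := PresentedGroup.of true
def Artin.b (k : ℕ) : Artin k := PresentedGroup.of false

/-- The Garside element `Δ = prod(a,b;k)`. -/
def Artin.Delta (k : ℕ) : Artin k := prodd (Artin.a k) (Artin.b k) k

/-- The set `M⁺` of proper alternating positive words of length `1,…,k-1`. -/
def Mplus (k : ℕ) : Set (Artin k) :=
  {w | ∃ i, 1 ≤ i ∧ i ≤ k - 1 ∧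
    (w = prodd (Artin.a k) (Artin.b k) i ∨ w = prodd (Artin.b k) (Artin.a k) i)}

/-- The Artin generating set `{a, b, a⁻¹, b⁻¹}`. -/
def artinGens (k : ℕ) : Set (Artin k) :=
  {Artin.a k, Artin.b k, (Artin.a k)⁻¹, (Artin.b k)⁻¹}

/-- Word length of `w` with respect to a generating set `S` (assumed symmetric). -/
noncomputable def wordLength {G : Type*} [Group G] (S : Set G) (w : G) : ℕ :=
  sInf {n | ∃ l : List G, l.length = n ∧ (∀ g ∈ l, g ∈ S) ∧ l.prod = w}

/-- `x = Δ^r z₁⋯zₘ` is a left normal form: the factors lie in `M⁺` and the number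
of factors is minimal among all such decompositions. -/
def IsLeftNF (k : ℕ) (x : Artin k) (r : ℤ) (zs : List (Artin k)) : Prop :=
  (∀ z ∈ zs, z ∈ Mplus k) ∧ x = Artin.Delta k ^ r * zs.prod ∧
    ∀ (r' : ℤ) (zs' : List (Artin k)), (∀ z ∈ zs', z ∈ Mplus k) →
      x = Artin.Delta k ^ r' * zs'.prod → zs.length ≤ zs'.length

/-- The number of canonical factors of length `i` in the list of factors `zs`. -/
noncomputable def countLen {k : ℕ} (zs : List (Artin k)) (i : ℕ) : ℕ :=
  Nat.card {j : Fin zs.length //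
    zs.get j = prodd (Artin.a k) (Artin.b k) i ∨ zs.get j = prodd (Artin.b k) (Artin.a k) i}

/-- The vector `π`: `piOf r zs j = r + m_{k-1} + ⋯ + m_{k-j}`. -/
noncomputable def piOf (k : ℕ) (r : ℤ) (zs : List (Artin k)) (j : ℕ) : ℤ :=
  r + ∑ t ∈ Finset.range j, (countLen zs (k - 1 - t) : ℤ)


def altL {G : Type*} : G → G → ℕ → List G
  | _, _, 0 => []
  | s, t, n + 1 => s :: altL t s n

lemma altL_prod {G : Type*} [Monoid G] (s t : G) (n : ℕ) :
    (altL s t n).prod = prodd s t n := by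
  induction n generalizing s t with
  | zero => rfl
  | succ m ih => simp [altL, prodd, ih]

lemma altL_length {G : Type*} (s t : G) (n : ℕ) : (altL s t n).length = n := by
  induction n generalizing s t with
  | zero => rfl
  | succ m ih => simp [altL, ih]

lemma altL_mem {G : Type*} (s t : G) (n : ℕ) (g : G) (hg : g ∈ altL s t n) :
    g = s ∨ g = t := by
  induction n generalizing s t with
  | zero => simp [altL] at hg
  | succ m ih =>
    simp only [altL, List.mem_cons] at hg
    rcases hg with h | h
    · exact Or.inl h
    · exact (ih t s h).symm

lemma map_prodd {G H : Type*} [Monoid G] [Monoid H] (φ : G →* H) (s t : G) (n : ℕ) :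
    φ (prodd s t n) = prodd (φ s) (φ t) n := by
  induction n generalizing s t with
  | zero => simp [prodd]
  | succ m ih => simp [prodd, ih]

lemma prodd_self {G : Type*} [Monoid G] (s : G) (n : ℕ) : prodd s s n = s ^ n := by
  induction n with
  | zero => simp [prodd]
  | succ m ih => rw [prodd, ih, pow_succ']

noncomputable def phi (k : ℕ) : Artin k →* Multiplicative ℤ :=
  PresentedGroup.toGroup (f := fun _ : Bool => Multiplicative.ofAdd (1 : ℤ)) (by
    intro r hr
    simp only [ArtinRels, Set.mem_singleton_iff] at hr
    subst hr
    rw [map_mul, map_inv, map_prodd, map_prodd]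
    simp [prodd_self])

lemma phi_a (k : ℕ) : phi k (Artin.a k) = Multiplicative.ofAdd (1:ℤ) :=
  PresentedGroup.toGroup.of _

lemma phi_b (k : ℕ) : phi k (Artin.b k) = Multiplicative.ofAdd (1:ℤ) :=
  PresentedGroup.toGroup.of _

lemma phi_bound (k : ℕ) (l : List (Artin k)) (h : ∀ g ∈ l, g ∈ artinGens k) :
    |Multiplicative.toAdd (phi k l.prod)| ≤ (l.length : ℤ) := by
  induction l with
  | nil => simp
  | cons g l ih =>
    have hg := h g List.mem_cons_self
    have habs : |Multiplicative.toAdd (phi k g)| = 1 := by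
      simp only [artinGens, Set.mem_insert_iff, Set.mem_singleton_iff] at hg
      rcases hg with rfl | rfl | rfl | rfl <;>
        simp [phi_a, phi_b]
    calc |Multiplicative.toAdd (phi k (g :: l).prod)|
        = |Multiplicative.toAdd (phi k g) + Multiplicative.toAdd (phi k l.prod)| := by
          simp [List.prod_cons]
      _ ≤ |Multiplicative.toAdd (phi k g)| + |Multiplicative.toAdd (phi k l.prod)| :=
          abs_add_le _ _
      _ ≤ 1 + l.length := by
          exact add_le_add (le_of_eq habs) (ih fun g hg => h g (List.mem_cons_of_mem _ hg))
      _ = ((g :: l).length : ℤ) := by simp [add_comm]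

theorem alternating_word_is_geodesic (k : ℕ) (hk : 3 ≤ k) (n : ℕ) :
    wordLength (artinGens k) (prodd (Artin.a k) (Artin.b k) n) = n := by
  have hmem : n ∈ {m | ∃ l : List (Artin k), l.length = m ∧ (∀ g ∈ l, g ∈ artinGens k) ∧
      l.prod = prodd (Artin.a k) (Artin.b k) n} := by
    refine ⟨altL (Artin.a k) (Artin.b k) n, altL_length _ _ _, ?_, altL_prod _ _ _⟩
    intro g hg
    rcases altL_mem _ _ _ _ hg with rfl | rfl
    · exact Or.inl rfl
    · exact Or.inr (Or.inl rfl)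
  apply le_antisymm
  · exact Nat.sInf_le hmem
  · apply le_csInf ⟨n, hmem⟩
    rintro m ⟨l, hlen, hS, hprod⟩
    have hb := phi_bound k l hS
    rw [hprod, hlen] at hb
    have hval : phi k (prodd (Artin.a k) (Artin.b k) n) = Multiplicative.ofAdd (n : ℤ) := by
      rw [map_prodd, phi_a, phi_b, prodd_self]
      simp [← ofAdd_nsmul]
    rw [hval] at hb
    have : (n : ℤ) ≤ (m : ℤ) := by
      simpa using hb
    exact_mod_cast this
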